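/- Let H be a Hilbert space, V a closed subspace, L : H → ℝ^m continuous linear, y ∈ range(L), and f̂ a minimizer of ‖f − P_V f‖ subject to L(f) = y. Then for every f with L(f) = y, ‖f − P_V f‖² = ‖f̂ − P_V f̂‖² + ‖(f − f̂) − P_V(f − f̂)‖². -/

import Mathlib

open scoped RealInnerProductSpace

lemma aux_inner_zero {H : Type*} [NormedAddCommGroup H] [InnerProductSpace ℝ H]
    (a b : H) (h : ∀ t : ℝ, ‖a‖ ≤ ‖a + t • b‖) : ⟪a, b⟫ = 0 := by
  by_cases hb : b = 0
  · simp [hb]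
  have hb2 : (0:ℝ) < ‖b‖ ^ 2 := pow_pos (norm_pos_iff.mpr hb) 2
  set t : ℝ := -⟪a, b⟫ / ‖b‖ ^ 2 with ht
  have h1 : ‖a‖ ^ 2 ≤ ‖a + t • b‖ ^ 2 := by
    have := h t
    nlinarith [norm_nonneg a, norm_nonneg (a + t • b)]
  have hexp : ‖a + t • b‖ ^ 2 = ‖a‖ ^ 2 + 2 * t * ⟪a, b⟫ + t ^ 2 * ‖b‖ ^ 2 := by
    rw [norm_add_sq_real, real_inner_smul_right, norm_smul]
    simp [mul_pow]
    ring
  have ht2 : 2 * t * ⟪a, b⟫ + t ^ 2 * ‖b‖ ^ 2 = -(⟪a, b⟫ ^ 2 / ‖b‖ ^ 2) := by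
    rw [ht]
    field_simp
    ring
  have hle : ⟪a, b⟫ ^ 2 / ‖b‖ ^ 2 ≤ 0 := by linarith
  have := div_nonneg (sq_nonneg ⟪a, b⟫) (le_of_lt hb2)
  have h0 : ⟪a, b⟫ ^ 2 / ‖b‖ ^ 2 = 0 := le_antisymm hle this
  field_simp at h0; simpa using h0

theorem stmt_4 {H : Type*} [NormedAddCommGroup H] [InnerProductSpace ℝ H]
    {m : ℕ} (V : Submodule ℝ H) [CompleteSpace V]
    (L : H →L[ℝ] EuclideanSpace ℝ (Fin m)) (y : EuclideanSpace ℝ (Fin m))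
    (fhat : H) (hdata : L fhat = y)
    (hmin : ∀ f : H, L f = y →
      ‖fhat - (V.orthogonalProjection fhat : H)‖ ≤ ‖f - (V.orthogonalProjection f : H)‖) :
    ∀ f : H, L f = y →
      ‖f - (V.orthogonalProjection f : H)‖ ^ 2 =
        ‖fhat - (V.orthogonalProjection fhat : H)‖ ^ 2 +
          ‖(f - fhat) - (V.orthogonalProjection (f - fhat) : H)‖ ^ 2 := by
  intro f hf
  set a : H := fhat - (V.orthogonalProjection fhat : H) with ha
  set u : H := f - fhat with hu
  set b : H := u - (V.orthogonalProjection u : H) with hbdef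
  have hLu : L u = 0 := by simp [hu, map_sub, hf, hdata]
  have hline : ∀ t : ℝ, ‖a‖ ≤ ‖a + t • b‖ := by
    intro t
    have hLy : L (fhat + t • u) = y := by
      simp [map_add, map_smul, hdata, hLu]
    have := hmin (fhat + t • u) hLy
    have heq : (fhat + t • u) - (V.orthogonalProjection (fhat + t • u) : H)
        = a + t • b := by
      simp only [map_add, map_smul, Submodule.coe_add, Submodule.coe_smul, ha, hbdef]
      module
    rwa [heq] at this
  have hz : ⟪a, b⟫ = 0 := aux_inner_zero a b hline
  have hfe : f - (V.orthogonalProjection f : H) = a + b := by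
    have : f = fhat + u := by simp [hu]
    rw [this]
    simp only [map_add, Submodule.coe_add, ha, hbdef]
    abel
  rw [hfe, norm_add_sq_real, hz]
  ring
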